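/- Let g = (r,k) and h = (r',k') be elements of G = R ⋊_λ ℤ. The pair (g,h) generates G if and only if the integers k and k' are coprime and Δ(g,h) = r'·δ(k) − r·δ(k') is a unit of R. -/

import Mathlib

/-- The semidirect product `R ⋊_u ℤ`: underlying set `R × ℤ` with multiplication
`(r, k) · (r', k') = (r + u^k · r', k + k')`, where `u` is a unit of the commutative ring
`R`. -/
def SDP (R : Type*) [CommRing R] (u : Rˣ) : Type _ := R × ℤ

namespace SDP

variable {R : Type*} [CommRing R] {u : Rˣ}

instance : Mul (SDP R u) := ⟨fun g h => (g.1 + ((u ^ g.2 : Rˣ) : R) * h.1, g.2 + h.2)⟩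
instance : One (SDP R u) := ⟨((0 : R), (0 : ℤ))⟩
instance : Inv (SDP R u) := ⟨fun g => (-(((u ^ (-g.2) : Rˣ) : R) * g.1), -g.2)⟩

theorem mul_def (g h : SDP R u) :
    g * h = (g.1 + ((u ^ g.2 : Rˣ) : R) * h.1, g.2 + h.2) := rfl
theorem one_def : (1 : SDP R u) = ((0 : R), (0 : ℤ)) := rfl
theorem inv_def (g : SDP R u) : g⁻¹ = (-(((u ^ (-g.2) : Rˣ) : R) * g.1), -g.2) := rfl

instance instGroup : Group (SDP R u) where
  mul_assoc a b c := by
    rw [mul_def, mul_def, mul_def, mul_def]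
    refine Prod.ext ?_ ?_
    · show (a.1 + ↑(u ^ a.2) * b.1) + ↑(u ^ (a.2 + b.2)) * c.1
        = a.1 + ↑(u ^ a.2) * (b.1 + ↑(u ^ b.2) * c.1)
      rw [zpow_add]; push_cast; ring
    · show (a.2 + b.2) + c.2 = a.2 + (b.2 + c.2); omega
  one_mul a := by
    rw [mul_def]
    refine Prod.ext ?_ ?_
    · show (0 : R) + ↑(u ^ (0 : ℤ)) * a.1 = a.1; simp
    · show (0 : ℤ) + a.2 = a.2; omega
  mul_one a := by
    rw [mul_def]
    refine Prod.ext ?_ ?_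
    · show a.1 + ↑(u ^ a.2) * (0 : R) = a.1; simp
    · show a.2 + (0 : ℤ) = a.2; omega
  inv_mul_cancel a := by
    rw [mul_def]
    refine Prod.ext ?_ ?_
    · show -(↑(u ^ (-a.2)) * a.1) + ↑(u ^ (-a.2)) * a.1 = (0 : R); simp
    · show -a.2 + a.2 = (0 : ℤ); omega

end SDP

/-- `δ(k) = ∑_{0 ≤ i < k} λ^i` for `k ≥ 0` and `δ(k) = -∑_{k ≤ i < 0} λ^i` for `k < 0`
(so that `(λ - 1) δ(k) = λ^k - 1`). -/
def sdpDelta {R : Type*} [CommRing R] (u : Rˣ) (k : ℤ) : R :=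
  if 0 ≤ k then ∑ i ∈ Finset.range k.toNat, (u : R) ^ i
  else -∑ i ∈ Finset.range (-k).toNat, ((u ^ (k + (i : ℤ)) : Rˣ) : R)

/-- `Δ((r,k), (r',k')) = r' δ(k) - r δ(k')`. -/
def sdpDeltaPair {R : Type*} [CommRing R] (u : Rˣ) (g h : SDP R u) : R :=
  h.1 * sdpDelta u g.2 - g.1 * sdpDelta u h.2

section Delta
variable {R : Type*} [CommRing R] (u : Rˣ)

theorem val_zpow_add (u : Rˣ) (m n : ℤ) :
    ((u ^ (m + n) : Rˣ) : R) = ((u ^ m : Rˣ) : R) * ((u ^ n : Rˣ) : R) := by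
  rw [zpow_add, Units.val_mul]

theorem sdpDelta_zero : sdpDelta u 0 = 0 := by simp [sdpDelta]

theorem sdpDelta_succ (k : ℤ) :
    sdpDelta u (k + 1) = sdpDelta u k + ((u ^ k : Rˣ) : R) := by
  rcases lt_trichotomy k 0 with hk | rfl | hk
  · rcases eq_or_lt_of_le (by omega : k + 1 ≤ 0) with hk1 | hk1
    · -- k = -1
      have : k = -1 := by omega
      subst this
      simp [sdpDelta]
    · have h1 : ¬ (0 ≤ k + 1) := by omega
      have h2 : ¬ (0 ≤ k) := by omega
      rw [sdpDelta, sdpDelta, if_neg h1, if_neg h2]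
      have hn : (-k).toNat = (-(k+1)).toNat + 1 := by omega
      rw [hn, Finset.sum_range_succ']
      have he : ∀ i : ℕ, ((u ^ (k + ((i:ℕ)+1 : ℤ)) : Rˣ) : R) = ((u ^ ((k+1) + (i : ℤ)) : Rˣ) : R) := by
        intro i; congr 1; push_cast; ring_nf
      push_cast
      rw [Finset.sum_congr rfl (fun i _ => he i)]
      have : ((u ^ ((k : ℤ) + 0) : Rˣ) : R) = ((u ^ k : Rˣ) : R) := by norm_num
      rw [this]; ring
  · simp [sdpDelta]
  · have h1 : (0:ℤ) ≤ k + 1 := by omega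
    have h2 : (0:ℤ) ≤ k := by omega
    rw [sdpDelta, sdpDelta, if_pos h1, if_pos h2]
    have hn : (k+1).toNat = k.toNat + 1 := by omega
    rw [hn, Finset.sum_range_succ]
    congr 1
    conv_rhs => rw [show (k : ℤ) = (k.toNat : ℤ) from (Int.toNat_of_nonneg h2).symm]
    rw [zpow_natCast, Units.val_pow_eq_pow_val]

theorem sdpDelta_add (m n : ℤ) :
    sdpDelta u (m + n) = sdpDelta u m + ((u ^ m : Rˣ) : R) * sdpDelta u n := by
  induction n using Int.induction_on with
  | zero => simp [sdpDelta_zero]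
  | succ n ih =>
      have h1 := sdpDelta_succ u (m + n)
      have h2 := sdpDelta_succ u (n : ℤ)
      rw [show m + ((n : ℤ) + 1) = (m + n) + 1 by ring, h1, ih, h2, mul_add,
        show ((u ^ (m + (n:ℤ)) : Rˣ) : R) = ((u ^ m : Rˣ) : R) * ((u ^ (n:ℤ) : Rˣ) : R) by
          rw [zpow_add]; exact Units.val_mul _ _]
      ring
  | pred n ih =>
      have h1 := sdpDelta_succ u (m + (-(n:ℤ) - 1))
      have h2 := sdpDelta_succ u (-(n:ℤ) - 1)
      rw [show m + (-(n:ℤ) - 1) + 1 = m + (-(n:ℤ)) by ring] at h1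
      rw [show -(n:ℤ) - 1 + 1 = -(n:ℤ) by ring] at h2
      have hsplit : ((u ^ (m + (-(n:ℤ)-1)) : Rˣ) : R)
          = ((u ^ m : Rˣ) : R) * ((u ^ (-(n:ℤ)-1) : Rˣ) : R) := val_zpow_add u m _
      linear_combination ih - h1 + ((u ^ m : Rˣ) : R) * h2 - hsplit

theorem sdpDelta_geom (k : ℤ) :
    ((u : R) - 1) * sdpDelta u k = ((u ^ k : Rˣ) : R) - 1 := by
  induction k using Int.induction_on with
  | zero => simp [sdpDelta_zero]
  | succ n ih =>
      have hsplit : ((u ^ ((n:ℤ) + 1) : Rˣ) : R)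
          = ((u ^ (n:ℤ) : Rˣ) : R) * ((u ^ (1:ℤ) : Rˣ) : R) := val_zpow_add u _ _
      rw [sdpDelta_succ, mul_add, ih, hsplit, zpow_one]
      ring
  | pred n ih =>
      have h1 := sdpDelta_succ u (-(n:ℤ) - 1)
      rw [show (-(n:ℤ) - 1) + 1 = -(n:ℤ) by ring] at h1
      have h2 : ((u ^ ((-(n:ℤ)-1) + 1) : Rˣ) : R) = ((u ^ (-(n:ℤ)-1) : Rˣ) : R) * ((u ^ (1:ℤ) : Rˣ) : R) :=
        val_zpow_add u _ _
      rw [show (-(n:ℤ)-1) + 1 = -(n:ℤ) by ring] at h2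
      rw [h1, mul_add, h2, zpow_one] at ih
      linear_combination ih

theorem sdpDelta_sub_mem (k : ℤ) :
    sdpDelta u k - (k : R) ∈ Ideal.span {(u : R) - 1} := by
  induction k using Int.induction_on with
  | zero => simp [sdpDelta_zero]
  | succ n ih =>
      rw [sdpDelta_succ]
      have h2 : ((u ^ (n:ℤ) : Rˣ) : R) - 1 ∈ Ideal.span {(u : R) - 1} :=
        Ideal.mem_span_singleton.mpr ⟨sdpDelta u n, (sdpDelta_geom u n).symm⟩
      have := Ideal.add_mem _ ih h2
      convert this using 1; push_cast; ring
  | pred n ih =>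
      have h1 := sdpDelta_succ u (-(n:ℤ) - 1)
      rw [show (-(n:ℤ) - 1) + 1 = -(n:ℤ) by ring] at h1
      have h2 : ((u ^ (-(n:ℤ)-1) : Rˣ) : R) - 1 ∈ Ideal.span {(u : R) - 1} :=
        Ideal.mem_span_singleton.mpr ⟨sdpDelta u (-(n:ℤ)-1), (sdpDelta_geom u _).symm⟩
      have := Ideal.sub_mem _ ih h2
      convert this using 1; rw [h1]; push_cast; ring

theorem units_pow_sub_one_mem (k : ℤ) :
    ((u ^ k : Rˣ) : R) - 1 ∈ Ideal.span {(u : R) - 1} :=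
  Ideal.mem_span_singleton.mpr ⟨sdpDelta u k, (sdpDelta_geom u k).symm⟩

end Delta


namespace SDP

variable {R : Type*} [CommRing R] {u : Rˣ}

theorem snd_mul' (g h : SDP R u) : (g * h).2 = g.2 + h.2 := rfl
theorem snd_one' : (1 : SDP R u).2 = 0 := rfl
theorem snd_inv' (g : SDP R u) : (g⁻¹).2 = -g.2 := rfl
theorem fst_mul' (g h : SDP R u) : (g * h).1 = g.1 + ((u ^ g.2 : Rˣ) : R) * h.1 := rfl
theorem fst_inv' (g : SDP R u) : (g⁻¹).1 = -(((u ^ (-g.2) : Rˣ) : R) * g.1) := rfl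

theorem snd_zpow (g : SDP R u) (n : ℤ) : (g ^ n).2 = n * g.2 := by
  induction n using Int.induction_on with
  | zero => rw [zpow_zero]; simp [snd_one']
  | succ n ih => rw [zpow_add_one, snd_mul', ih]; push_cast; ring
  | pred n ih => rw [zpow_sub_one, snd_mul', snd_inv', ih]; push_cast; ring

theorem fst_zpow_mem (g : SDP R u) (n : ℤ) :
    (g ^ n).1 - (n : R) * g.1 ∈ Ideal.span {(u : R) - 1} := by
  induction n using Int.induction_on with
  | zero => rw [zpow_zero]; simp [one_def]
  | succ n ih =>
      rw [zpow_add_one, fst_mul']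
      have h2 : ((u ^ (g ^ (n:ℤ)).2 : Rˣ) : R) - 1 ∈ Ideal.span {(u : R) - 1} :=
        units_pow_sub_one_mem u _
      have := Ideal.add_mem _ ih (Ideal.mul_mem_right g.1 _ h2)
      convert this using 1; push_cast; ring
  | pred n ih =>
      rw [zpow_sub_one, fst_mul', fst_inv']
      have h2 : ((u ^ (g ^ (-(n:ℤ))).2 : Rˣ) : R) * ((u ^ (-g.2) : Rˣ) : R) - 1
          ∈ Ideal.span {(u : R) - 1} := by
        have := units_pow_sub_one_mem (R := R) u ((g ^ (-(n:ℤ))).2 + -g.2)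
        rwa [val_zpow_add] at this
      have := Ideal.sub_mem _ ih (Ideal.mul_mem_right g.1 _ h2)
      convert this using 1; push_cast; ring

end SDP


def sdpOfRing {R : Type*} [CommRing R] (u : Rˣ) (x : R) : SDP R u := (x, 0)

theorem sdpOfRing_fst {R : Type*} [CommRing R] (u : Rˣ) (x : R) : (sdpOfRing u x).1 = x := rfl
theorem sdpOfRing_snd {R : Type*} [CommRing R] (u : Rˣ) (x : R) : (sdpOfRing u x).2 = 0 := rfl

/-- Let `R` be a commutative ring generated by a unit `λ ≠ 1` and its inverse, and let
`G = R ⋊_λ ℤ`.  A pair `(g, h) = ((r, k), (r', k'))` of elements of `G` generates `G` if and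
only if `k` and `k'` are coprime and `Δ(g, h) = r' δ(k) - r δ(k')` is a unit of `R`. -/
theorem sdp_generating_pair_iff
    {R : Type*} [CommRing R] (u : Rˣ) (hu : (u : R) ≠ 1)
    (hgen : Subring.closure ({(u : R), ((u⁻¹ : Rˣ) : R)} : Set R) = ⊤)
    (g h : SDP R u) :
    Subgroup.closure ({g, h} : Set (SDP R u)) = ⊤ ↔
      IsCoprime g.2 h.2 ∧ IsUnit (sdpDeltaPair u g h) := by
  classical
  have hval : ∀ m : ℤ, ((u ^ m : Rˣ) : R) * ((u ^ (-m) : Rˣ) : R) = 1 := by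
    intro m
    rw [← val_zpow_add, add_neg_cancel, zpow_zero, Units.val_one]
  constructor
  · intro htop
    -- first, coprimality
    have hcop : IsCoprime g.2 h.2 := by
      let S : Subgroup (SDP R u) :=
        { carrier := {w | w.2 ∈ AddSubgroup.closure ({g.2, h.2} : Set ℤ)}
          one_mem' := by
            show (1 : SDP R u).2 ∈ AddSubgroup.closure ({g.2, h.2} : Set ℤ)
            rw [SDP.snd_one']; exact AddSubgroup.zero_mem _
          mul_mem' := by
            intro a b ha hb
            show (a * b).2 ∈ AddSubgroup.closure ({g.2, h.2} : Set ℤ)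
            rw [SDP.snd_mul']; exact AddSubgroup.add_mem _ ha hb
          inv_mem' := by
            intro a ha
            show (a⁻¹).2 ∈ AddSubgroup.closure ({g.2, h.2} : Set ℤ)
            rw [SDP.snd_inv']; exact AddSubgroup.neg_mem _ ha }
      have hle : Subgroup.closure ({g, h} : Set (SDP R u)) ≤ S := by
        rw [Subgroup.closure_le]
        rintro w hw
        rcases hw with rfl | hw
        · exact AddSubgroup.subset_closure (by simp)
        · rw [Set.mem_singleton_iff] at hw; subst hw
          exact AddSubgroup.subset_closure (by simp)
      rw [htop] at hle
      have h1 : (((0:R), (1:ℤ)) : SDP R u) ∈ S := hle (Subgroup.mem_top _)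
      have h1' : (1 : ℤ) ∈ AddSubgroup.closure ({g.2, h.2} : Set ℤ) := h1
      rw [AddSubgroup.mem_closure_pair] at h1'
      obtain ⟨m, n, hmn⟩ := h1'
      exact ⟨m, n, by rw [← hmn]; push_cast [zsmul_eq_mul]; ring⟩
    refine ⟨hcop, ?_⟩
    obtain ⟨a, b, hab⟩ := hcop
    by_contra hnu
    obtain ⟨𝔪, hmax, hmem⟩ : ∃ 𝔪 : Ideal R, 𝔪.IsMaximal ∧ sdpDeltaPair u g h ∈ 𝔪 := by
      obtain ⟨𝔪, h1, h2⟩ := Ideal.exists_le_maximal (Ideal.span {sdpDeltaPair u g h}) (by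
        rw [Ne, Ideal.span_singleton_eq_top]; exact hnu)
      exact ⟨𝔪, h1, h2 (Ideal.mem_span_singleton_self _)⟩
    haveI := hmax
    set φ : R →+* R ⧸ 𝔪 := Ideal.Quotient.mk 𝔪 with hφ
    set v : (R ⧸ 𝔪)ˣ := Units.map (φ : R →* R ⧸ 𝔪) u with hv
    have hvu : ∀ m : ℤ, φ ((u ^ m : Rˣ) : R) = ((v ^ m : (R ⧸ 𝔪)ˣ) : R ⧸ 𝔪) := by
      intro m
      rw [hv, ← map_zpow (Units.map (φ : R →* R ⧸ 𝔪)) u m]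
      rfl
    set d : R ⧸ 𝔪 := φ (sdpDelta u g.2) with hd
    set d' : R ⧸ 𝔪 := φ (sdpDelta u h.2) with hd'
    have hΔ0 : φ h.1 * d - φ g.1 * d' = 0 := by
      rw [hd, hd', ← map_mul, ← map_mul, ← map_sub]
      exact (Ideal.Quotient.eq_zero_iff_mem).mpr hmem
    letI : Field (R ⧸ 𝔪) := Ideal.Quotient.field 𝔪
    -- find c with φ g.1 = c * d and φ h.1 = c * d'
    obtain ⟨c, hc1, hc2⟩ : ∃ c : R ⧸ 𝔪, φ g.1 = c * d ∧ φ h.1 = c * d' := by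
      by_cases hd0 : d = 0
      · by_cases hd'0 : d' = 0
        · -- impossible
          exfalso
          have hgeo : ∀ m : ℤ, (φ ((u : Rˣ) : R) - 1) * φ (sdpDelta u m)
              = ((v ^ m : (R ⧸ 𝔪)ˣ) : R ⧸ 𝔪) - 1 := by
            intro m
            have := congrArg φ (sdpDelta_geom u m)
            rwa [map_mul, map_sub, map_sub, map_one, hvu] at this
          have hk : (v ^ g.2 : (R ⧸ 𝔪)ˣ) = 1 := by
            have h0 := hgeo g.2
            rw [← hd, hd0, mul_zero] at h0
            exact Units.ext (by rw [Units.val_one]; linear_combination -h0)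
          have hk' : (v ^ h.2 : (R ⧸ 𝔪)ˣ) = 1 := by
            have h0 := hgeo h.2
            rw [← hd', hd'0, mul_zero] at h0
            exact Units.ext (by rw [Units.val_one]; linear_combination -h0)
          have hv1 : v = 1 := by
            have hrw : v = (v ^ g.2) ^ a * (v ^ h.2) ^ b := by
              rw [← zpow_mul, ← zpow_mul, ← zpow_add,
                show g.2 * a + h.2 * b = 1 by linarith [hab], zpow_one]
            rw [hk, hk', one_zpow, one_zpow, one_mul] at hrw
            exact hrw
          have hφu : φ ((u : Rˣ) : R) = 1 := by
            have : ((v : (R ⧸ 𝔪)ˣ) : R ⧸ 𝔪) = 1 := by rw [hv1, Units.val_one]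
            rwa [show ((v : (R ⧸ 𝔪)ˣ) : R ⧸ 𝔪) = φ ((u : Rˣ) : R) from rfl] at this
          have hker : ∀ x : R, x ∈ Ideal.span {(u : R) - 1} → φ x = 0 := by
            intro x hx
            obtain ⟨y, hy⟩ := Ideal.mem_span_singleton.mp hx
            rw [hy, map_mul, map_sub, map_one, hφu, sub_self, zero_mul]
          have hcast : ∀ m : ℤ, φ (sdpDelta u m) = (m : R ⧸ 𝔪) := by
            intro m
            have h0 := hker _ (sdpDelta_sub_mem u m)
            rw [map_sub, map_intCast, sub_eq_zero] at h0
            exact h0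
          have hg0 : ((g.2 : ℤ) : R ⧸ 𝔪) = 0 := by rw [← hcast, ← hd, hd0]
          have hh0 : ((h.2 : ℤ) : R ⧸ 𝔪) = 0 := by rw [← hcast, ← hd', hd'0]
          have hone := congrArg (fun n : ℤ => ((n : R ⧸ 𝔪))) hab
          push_cast at hone
          rw [hg0, hh0, mul_zero, mul_zero, add_zero] at hone
          exact one_ne_zero hone.symm
        · refine ⟨φ h.1 * (d')⁻¹, ?_, ?_⟩
          · field_simp
            linear_combination -hΔ0
          · field_simp
      · refine ⟨φ g.1 * d⁻¹, ?_, ?_⟩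
        · field_simp
        · field_simp
          linear_combination hΔ0
    -- the proper subgroup
    let S : Subgroup (SDP R u) :=
      { carrier := {w | φ w.1 = c * φ (sdpDelta u w.2)}
        one_mem' := by
          show φ (1 : SDP R u).1 = c * φ (sdpDelta u (1 : SDP R u).2)
          rw [SDP.one_def]
          simp [sdpDelta_zero]
        mul_mem' := by
          intro p q hp hq
          have hp' : φ p.1 = c * φ (sdpDelta u p.2) := hp
          have hq' : φ q.1 = c * φ (sdpDelta u q.2) := hq
          show φ (p * q).1 = c * φ (sdpDelta u (p * q).2)
          rw [SDP.fst_mul', SDP.snd_mul', map_add, map_mul, hvu, hp', hq',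
            sdpDelta_add, map_add, map_mul, hvu]
          ring
        inv_mem' := by
          intro p hp
          have hp' : φ p.1 = c * φ (sdpDelta u p.2) := hp
          show φ (p⁻¹).1 = c * φ (sdpDelta u (p⁻¹).2)
          rw [SDP.fst_inv', SDP.snd_inv', map_neg, map_mul, hvu, hp']
          have hneg : φ (sdpDelta u (-p.2))
              = -((v ^ (-p.2) : (R ⧸ 𝔪)ˣ) : R ⧸ 𝔪) * φ (sdpDelta u p.2) := by
            have h0 := sdpDelta_add u p.2 (-p.2)
            rw [add_neg_cancel, sdpDelta_zero] at h0
            have := congrArg φ h0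
            rw [map_zero, map_add, map_mul, hvu] at this
            have hvv : ((v ^ (-p.2) : (R ⧸ 𝔪)ˣ) : R ⧸ 𝔪) * ((v ^ p.2 : (R ⧸ 𝔪)ˣ) : R ⧸ 𝔪) = 1 := by
              rw [mul_comm, ← Units.val_mul, ← zpow_add, add_neg_cancel, zpow_zero, Units.val_one]
            linear_combination (-(((v ^ (-p.2) : (R ⧸ 𝔪)ˣ) : R ⧸ 𝔪))) * this
              - φ (sdpDelta u (-p.2)) * hvv
          rw [hneg]; ring }
    have hle : Subgroup.closure ({g, h} : Set (SDP R u)) ≤ S := by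
      rw [Subgroup.closure_le]
      rintro w hw
      rcases hw with rfl | hw
      · exact hc1
      · rw [Set.mem_singleton_iff] at hw; subst hw; exact hc2
    rw [htop] at hle
    have h10 : sdpOfRing u ((1:R)) ∈ S := hle (Subgroup.mem_top _)
    have : φ 1 = c * φ (sdpDelta u 0) := h10
    rw [map_one, sdpDelta_zero, map_zero, mul_zero] at this
    exact one_ne_zero this
  · rintro ⟨hcop, hΔ⟩
    obtain ⟨a, b, hab⟩ := hcop
    obtain ⟨V, hV⟩ := hΔ
    set H := Subgroup.closure ({g, h} : Set (SDP R u)) with hH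
    have hg : g ∈ H := Subgroup.subset_closure (by simp)
    have hh : h ∈ H := Subgroup.subset_closure (by simp)
    -- conjugation
    have hconj : ∀ w : SDP R u, w ∈ H → ∀ x : R, sdpOfRing u (x) ∈ H →
        sdpOfRing u (((u ^ w.2 : Rˣ) : R) * x) ∈ H := by
      intro w hw x hx
      have hmem : w * sdpOfRing u (x) * w⁻¹ ∈ H := mul_mem (mul_mem hw hx) (inv_mem hw)
      have heq : w * sdpOfRing u (x) * w⁻¹
          = sdpOfRing u (((u ^ w.2 : Rˣ) : R) * x) := by
        rw [SDP.mul_def, SDP.mul_def, SDP.inv_def]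
        refine Prod.ext ?_ ?_
        · show w.1 + ((u ^ w.2 : Rˣ) : R) * x
              + ((u ^ (w.2 + (0:ℤ)) : Rˣ) : R) * (-(((u ^ (-w.2) : Rˣ) : R) * w.1))
            = ((u ^ w.2 : Rˣ) : R) * x
          rw [add_zero]
          have := hval w.2
          linear_combination (-w.1) * this
        · show w.2 + (0:ℤ) + -w.2 = 0
          omega
      rwa [heq] at hmem
    -- N closure properties
    have Nzero : sdpOfRing u ((0:R)) ∈ H := by
      have : ((1 : SDP R u)) ∈ H := one_mem H
      rwa [SDP.one_def] at this
    have Nadd : ∀ x y : R, sdpOfRing u (x) ∈ H → sdpOfRing u (y) ∈ H →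
        sdpOfRing u (x + y) ∈ H := by
      intro x y hx hy
      have hmem := mul_mem hx hy
      have heq : sdpOfRing u x * sdpOfRing u y
          = sdpOfRing u (x + y) := by
        rw [SDP.mul_def]
        refine Prod.ext ?_ rfl
        show x + ((u ^ (0:ℤ) : Rˣ) : R) * y = x + y
        rw [zpow_zero, Units.val_one, one_mul]
      rwa [heq] at hmem
    have Nneg : ∀ x : R, sdpOfRing u (x) ∈ H → sdpOfRing u (-x) ∈ H := by
      intro x hx
      have hmem := inv_mem hx
      have heq : (sdpOfRing u x)⁻¹ = sdpOfRing u (-x) := by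
        rw [SDP.inv_def]
        refine Prod.ext ?_ rfl
        show -(((u ^ (-(0:ℤ)) : Rˣ) : R) * x) = -x
        rw [neg_zero, zpow_zero, Units.val_one, one_mul]
      rwa [heq] at hmem
    -- element of second coordinate 1
    set w₀ : SDP R u := g ^ a * h ^ b with hw₀
    have hw₀H : w₀ ∈ H := mul_mem (zpow_mem hg a) (zpow_mem hh b)
    have hw₀2 : w₀.2 = 1 := by
      rw [hw₀, SDP.snd_mul', SDP.snd_zpow, SDP.snd_zpow, hab]
    -- N is stable under multiplication by u and u⁻¹
    have Nu : ∀ x : R, sdpOfRing u (x) ∈ H → sdpOfRing u ((u:R) * x) ∈ H := by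
      intro x hx
      have := hconj w₀ hw₀H x hx
      rwa [hw₀2, zpow_one] at this
    have Nuinv : ∀ x : R, sdpOfRing u (x) ∈ H →
        sdpOfRing u (((u⁻¹ : Rˣ):R) * x) ∈ H := by
      intro x hx
      have := hconj w₀⁻¹ (inv_mem hw₀H) x hx
      rwa [SDP.snd_inv', hw₀2, zpow_neg, zpow_one] at this
    -- N is an ideal
    let T : Subring R :=
      { carrier := {r : R | ∀ x : R, sdpOfRing u (x) ∈ H →
          sdpOfRing u (r * x) ∈ H}
        one_mem' := by intro x hx; rwa [one_mul]
        zero_mem' := by intro x hx; rw [zero_mul]; exact Nzero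
        add_mem' := by
          intro r s hr hs x hx
          have := Nadd _ _ (hr x hx) (hs x hx)
          rwa [← add_mul] at this
        neg_mem' := by
          intro r hr x hx
          have := Nneg _ (hr x hx)
          rwa [← neg_mul] at this
        mul_mem' := by
          intro r s hr hs x hx
          have := hr _ (hs x hx)
          rwa [← mul_assoc] at this }
    have hT : ∀ r x : R, sdpOfRing u (x) ∈ H → sdpOfRing u (r * x) ∈ H := by
      intro r
      have hle : Subring.closure ({(u : R), ((u⁻¹ : Rˣ) : R)} : Set R) ≤ T := by
        rw [Subring.closure_le]
        rintro s hs
        rcases hs with rfl | hs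
        · exact Nu
        · rw [Set.mem_singleton_iff] at hs; subst hs; exact Nuinv
      rw [hgen] at hle
      exact hle (Subring.mem_top r)
    -- the commutator
    have hcomm : sdpOfRing u (((u:R) - 1) * sdpDeltaPair u g h) ∈ H := by
      have hmem : g * h * (h * g)⁻¹ ∈ H := mul_mem (mul_mem hg hh) (inv_mem (mul_mem hh hg))
      have heq : g * h * (h * g)⁻¹
          = sdpOfRing u (((u:R) - 1) * sdpDeltaPair u g h) := by
        refine Prod.ext ?_ ?_
        · show g.1 + ((u ^ g.2 : Rˣ) : R) * h.1
              + ((u ^ (g.2 + h.2) : Rˣ) : R) *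
                (-(((u ^ (-(h.2 + g.2)) : Rˣ) : R) * (h.1 + ((u ^ h.2 : Rˣ) : R) * g.1)))
            = ((u:R) - 1) * sdpDeltaPair u g h
          have h1 := hval (g.2 + h.2)
          have h2 := sdpDelta_geom u g.2
          have h3 := sdpDelta_geom u h.2
          rw [show -(h.2 + g.2) = -(g.2 + h.2) by ring]
          rw [sdpDeltaPair]
          linear_combination (-(h.1 + ((u ^ h.2 : Rˣ) : R) * g.1)) * h1 - h.1 * h2 + g.1 * h3
        · show g.2 + h.2 + -(h.2 + g.2) = 0
          omega
      rwa [heq] at hmem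
    -- u - 1 ∈ N
    have hN1 : sdpOfRing u (((u:R) - 1)) ∈ H := by
      have := hT (((V⁻¹ : Rˣ) : R)) _ hcomm
      have heq : ((V⁻¹ : Rˣ) : R) * (((u:R) - 1) * sdpDeltaPair u g h) = (u:R) - 1 := by
        rw [← hV]
        have : ((V⁻¹ : Rˣ) : R) * ((V : Rˣ) : R) = 1 := by
          rw [← Units.val_mul, inv_mul_cancel, Units.val_one]
        linear_combination ((u:R) - 1) * this
      rwa [heq] at this
    -- z = g^{k'} h^{-k}
    set z : SDP R u := g ^ h.2 * h ^ (-g.2) with hz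
    have hzH : z ∈ H := mul_mem (zpow_mem hg _) (zpow_mem hh _)
    have hz2 : z.2 = 0 := by
      rw [hz, SDP.snd_mul', SDP.snd_zpow, SDP.snd_zpow]; ring
    have hzN : sdpOfRing u (z.1) ∈ H := by
      have : z = sdpOfRing u (z.1) := Prod.ext rfl hz2
      rwa [this] at hzH
    -- z.1 + Δ ∈ (u-1)
    have hzz : z.1 + sdpDeltaPair u g h ∈ Ideal.span {(u : R) - 1} := by
      have hA := SDP.fst_zpow_mem g h.2
      have hC := SDP.fst_zpow_mem h (-g.2)
      have hB : (((u ^ ((g ^ h.2 : SDP R u)).2 : Rˣ) : R) - 1) * (h ^ (-g.2) : SDP R u).1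
          ∈ Ideal.span {(u : R) - 1} :=
        Ideal.mul_mem_right _ _ (units_pow_sub_one_mem u _)
      have hD1 : h.1 * (sdpDelta u g.2 - (g.2 : R)) ∈ Ideal.span {(u : R) - 1} :=
        Ideal.mul_mem_left _ _ (sdpDelta_sub_mem u g.2)
      have hD2 : g.1 * (sdpDelta u h.2 - (h.2 : R)) ∈ Ideal.span {(u : R) - 1} :=
        Ideal.mul_mem_left _ _ (sdpDelta_sub_mem u h.2)
      have hsum := Ideal.add_mem _ (Ideal.add_mem _ (Ideal.add_mem _ hA hB) hC)
        (Ideal.sub_mem _ hD1 hD2)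
      convert hsum using 1
      rw [hz, SDP.fst_mul', sdpDeltaPair]
      push_cast
      ring
    obtain ⟨e, he⟩ : ∃ e : R, z.1 + sdpDeltaPair u g h = ((u:R) - 1) * e :=
      Ideal.mem_span_singleton.mp hzz
    -- Δ ∈ N
    have hΔN : sdpOfRing u (sdpDeltaPair u g h) ∈ H := by
      have h1 : sdpOfRing u (((u:R) - 1) * e) ∈ H := by
        have := hT e _ hN1
        rwa [mul_comm] at this
      have h2 := Nadd _ _ (Nneg _ hzN) h1
      have heq : -z.1 + ((u:R) - 1) * e = sdpDeltaPair u g h := by linear_combination -he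
      rwa [heq] at h2
    -- 1 ∈ N, hence all of R
    have hall : ∀ x : R, sdpOfRing u (x) ∈ H := by
      have h1 : sdpOfRing u ((1:R)) ∈ H := by
        have := hT (((V⁻¹ : Rˣ) : R)) _ hΔN
        have heq : ((V⁻¹ : Rˣ) : R) * sdpDeltaPair u g h = 1 := by
          rw [← hV, ← Units.val_mul, inv_mul_cancel, Units.val_one]
        rwa [heq] at this
      intro x
      have := hT x _ h1
      rwa [mul_one] at this
    -- conclude
    rw [eq_top_iff]
    intro w _
    have hwm : w₀ ^ w.2 ∈ H := zpow_mem hw₀H _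
    have hwm2 : (w₀ ^ w.2).2 = w.2 := by rw [SDP.snd_zpow, hw₀2, mul_one]
    have hsplit : w = sdpOfRing u (w.1 - (w₀ ^ w.2).1) * (w₀ ^ w.2) := by
      rw [SDP.mul_def]
      refine Prod.ext ?_ ?_
      · show w.1 = w.1 - (w₀ ^ w.2).1 + ((u ^ (0:ℤ) : Rˣ) : R) * (w₀ ^ w.2).1
        rw [zpow_zero, Units.val_one, one_mul]; ring
      · show w.2 = 0 + (w₀ ^ w.2).2
        rw [hwm2, zero_add]
    rw [hsplit]
    exact mul_mem (hall _) hwm
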